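/- Let d ∈ ℝ^p be a grid length vector with d_i > 0 for all i, and for l ∈ ℤ^p let Y_l = ∏_{i=1}^p [l_i d_i, (l_i+1) d_i]. Let y : [a, b] → ℝ^p be continuous with y(a) ∈ Y_l and y(b) ∈ Y_{l'}, where l, l' ∈ ℤ^p satisfy |l_i − l'_i| ≥ 2 for some coordinate i. Then there exist a time t ∈ [a, b] and a box index l'' ∈ ℤ^p with l'' ≠ l and l'' ≠ l' such that y(t) ∈ Y_{l''}. In other words, a continuous trajectory cannot pass between two non-adjacent boxes without visiting a third box. -/
import Mathlib


/-- The closed box `Y_l = ∏_{i=1}^p [l_i d_i, (l_i+1) d_i]` of the gridded output space. -/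
def gridBox {p : ℕ} (d : Fin p → ℝ) (l : Fin p → ℤ) : Set (Fin p → ℝ) :=
  {y | ∀ i, y i ∈ Set.Icc ((l i : ℝ) * d i) (((l i : ℝ) + 1) * d i)}

/-- A continuous trajectory cannot pass between two non-adjacent boxes (indices differing
by at least 2 in some coordinate) without visiting a third box. -/
theorem continuous_visits_third_box {p : ℕ} (d : Fin p → ℝ) (hd : ∀ i, 0 < d i)
    (a b : ℝ) (hab : a ≤ b) (y : ℝ → (Fin p → ℝ))
    (hy : ContinuousOn y (Set.Icc a b))
    (l l' : Fin p → ℤ)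
    (ha : y a ∈ gridBox d l) (hb : y b ∈ gridBox d l')
    (hfar : ∃ i, 2 ≤ |l i - l' i|) :
    ∃ t ∈ Set.Icc a b, ∃ l'' : Fin p → ℤ, l'' ≠ l ∧ l'' ≠ l' ∧ y t ∈ gridBox d l'' := by
  obtain ⟨i, hi⟩ := hfar
  have hcont : ContinuousOn (fun t => y t i) (Set.Icc a b) :=
    (continuous_apply i).comp_continuousOn hy
  have hdi := hd i
  obtain ⟨ha1, ha2⟩ := ha i
  obtain ⟨hb1, hb2⟩ := hb i
  have key : ∃ t ∈ Set.Icc a b, ∃ m : ℤ, m ≠ l i ∧ m ≠ l' i ∧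
      y t i = (m : ℝ) * d i := by
    rcases le_abs.mp hi with h | h
    · -- 2 ≤ l i - l' i, take m = l i - 1
      have hle : ((l i : ℝ) - 1) * d i ∈ Set.Icc (y b i) (y a i) := by
        constructor
        · refine le_trans hb2 ?_
          have : ((l' i : ℝ) + 1) ≤ (l i : ℝ) - 1 := by
            have : (l' i : ℝ) + 2 ≤ l i := by exact_mod_cast (by omega : l' i + 2 ≤ l i)
            linarith
          exact mul_le_mul_of_nonneg_right this hdi.le
        · refine le_trans ?_ ha1
          exact mul_le_mul_of_nonneg_right (by linarith) hdi.le
      obtain ⟨t, ht, hyt⟩ := intermediate_value_Icc' hab hcont hle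
      exact ⟨t, ht, l i - 1, by omega, by omega, by push_cast; linarith [hyt]⟩
    · -- 2 ≤ l' i - l i, take m = l i + 1
      have hle : ((l i : ℝ) + 1) * d i ∈ Set.Icc (y a i) (y b i) := by
        constructor
        · exact ha2
        · refine le_trans ?_ hb1
          have : ((l i : ℝ) + 1) ≤ (l' i : ℝ) := by
            exact_mod_cast (by omega : l i + 1 ≤ l' i)
          exact mul_le_mul_of_nonneg_right this hdi.le
      obtain ⟨t, ht, hyt⟩ := intermediate_value_Icc hab hcont hle
      exact ⟨t, ht, l i + 1, by omega, by omega, by push_cast; linarith [hyt]⟩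
  obtain ⟨t, ht, m, hm1, hm2, hyt⟩ := key
  refine ⟨t, ht, fun j => if j = i then m else ⌊ y t j / d j ⌋, ?_, ?_, ?_⟩
  · intro h
    exact hm1 (by simpa using congrFun h i)
  · intro h
    exact hm2 (by simpa using congrFun h i)
  · intro j
    by_cases hj : j = i
    · subst hj
      dsimp only
      rw [if_pos rfl, hyt]
      constructor
      · exact le_refl _
      · nlinarith
    · dsimp only
      rw [if_neg hj]
      have hdj := hd j
      have h1 : (⌊ y t j / d j ⌋ : ℝ) ≤ y t j / d j := Int.floor_le _
      have h2 : y t j / d j < (⌊ y t j / d j ⌋ : ℝ) + 1 := Int.lt_floor_add_one _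
      have hx : y t j / d j * d j = y t j := div_mul_cancel₀ _ hdj.ne'
      constructor
      · nlinarith
      · nlinarith
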